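/- Let T > 0, H ∈ (0,1), K > 0, and let φ : (0,2T] → ℝ be differentiable on (0,2T] with |φ′(u)| ≤ K u^{H-3/2} for all u ∈ (0,2T]. Then there exists a constant C > 0, depending only on T, H and K, such that for all h ∈ (0,T], ∫₀^T |φ(t+h) − φ(t)| dt ≤ C h^{(H+1)/2}. -/

import Mathlib

open MeasureTheory Set

private lemma aux_subadd {t h p : ℝ} (ht : 0 ≤ t) (hh : 0 ≤ h) (hp : 0 ≤ p) (hp1 : p ≤ 1) :
    (t + h) ^ p ≤ t ^ p + h ^ p := by
  rw [show (t+h)^p = (((t+h).toNNReal : ℝ))^p by rw [Real.coe_toNNReal _ (add_nonneg ht hh)],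
    show t^p = ((t.toNNReal : ℝ))^p by rw [Real.coe_toNNReal _ ht],
    show h^p = ((h.toNNReal : ℝ))^p by rw [Real.coe_toNNReal _ hh],
    ← NNReal.coe_rpow, ← NNReal.coe_rpow, ← NNReal.coe_rpow, ← NNReal.coe_add,
    NNReal.coe_le_coe, Real.toNNReal_add ht hh]
  exact NNReal.rpow_add_le_add_rpow _ _ hp hp1

/-- second estimate of Lemma 3.1, with exponent (H+1)/2. -/
theorem stmt_1 (T H K : ℝ) (hT : 0 < T) (hH : H ∈ Set.Ioo (0:ℝ) 1) (hK : 0 < K)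
    (φ φ' : ℝ → ℝ)
    (hderiv : ∀ u ∈ Set.Ioc (0:ℝ) (2*T), HasDerivAt φ (φ' u) u)
    (hbound : ∀ u ∈ Set.Ioc (0:ℝ) (2*T), |φ' u| ≤ K * u ^ (H - 3/2)) :
    ∃ C > 0, ∀ h ∈ Set.Ioc (0:ℝ) T,
      (∫ t in Set.Ioc (0:ℝ) T, |φ (t + h) - φ t|) ≤ C * h ^ ((H + 1)/2) := by
  obtain ⟨hH0, hH1⟩ := hH
  have hTH : (0:ℝ) < T ^ (H/2) := Real.rpow_pos_of_pos hT _
  refine ⟨(4*K/(H*(H+1)) + 2*K/H) * T^(H/2), by positivity, ?_⟩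
  intro h hh
  obtain ⟨hh0, hhT⟩ := hh
  -- basic facts
  have hsub : ∀ t ∈ Ioc (0:ℝ) T, Icc t (t+h) ⊆ Ioc (0:ℝ) (2*T) := by
    intro t ht u hu
    exact ⟨lt_of_lt_of_le ht.1 hu.1, by linarith [hu.2, ht.2, hhT]⟩
  have hφ'eq : ∀ u ∈ Ioc (0:ℝ) (2*T), deriv φ u = φ' u := fun u hu => (hderiv u hu).deriv
  -- interval integrability of φ'
  have hint : ∀ t ∈ Ioc (0:ℝ) T, IntervalIntegrable φ' volume t (t+h) := by
    intro t ht
    have hle : t ≤ t + h := by linarith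
    rw [intervalIntegrable_iff_integrableOn_Ioc_of_le hle]
    have hmeas : AEStronglyMeasurable φ' (volume.restrict (Ioc t (t+h))) := by
      refine ((measurable_deriv φ).aestronglyMeasurable.restrict).congr ?_
      refine (ae_restrict_iff' measurableSet_Ioc).2 (ae_of_all _ fun u hu => ?_)
      exact hφ'eq u (hsub t ht ⟨hu.1.le, hu.2⟩)
    refine Integrable.mono' (integrable_const (K * t ^ (H - 3/2))) hmeas ?_
    refine (ae_restrict_iff' measurableSet_Ioc).2 (ae_of_all _ fun u hu => ?_)
    have hu' : u ∈ Ioc (0:ℝ) (2*T) := hsub t ht ⟨hu.1.le, hu.2⟩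
    calc ‖φ' u‖ = |φ' u| := Real.norm_eq_abs _
      _ ≤ K * u ^ (H - 3/2) := hbound u hu'
      _ ≤ K * t ^ (H - 3/2) := by
          have := Real.rpow_le_rpow_of_nonpos ht.1 hu.1.le (by linarith : H - 3/2 ≤ 0)
          exact mul_le_mul_of_nonneg_left this hK.le
  -- FTC
  have hftc : ∀ t ∈ Ioc (0:ℝ) T, φ (t+h) - φ t = ∫ u in t..(t+h), φ' u := by
    intro t ht
    have hle : t ≤ t + h := by linarith
    refine (intervalIntegral.integral_eq_sub_of_hasDerivAt (fun u hu => ?_) (hint t ht)).symm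
    exact hderiv u (hsub t ht (by rwa [uIcc_of_le hle] at hu))
  -- first pointwise bound, valid on all of (0, T]
  have bnd1 : ∀ t ∈ Ioc (0:ℝ) T, |φ (t + h) - φ t| ≤ 2*K/H * h^(H/2) * t^((H-1)/2) := by
    intro t ht
    have hle : t ≤ t + h := by linarith
    have ht0 : (0:ℝ) < t := ht.1
    have hcont : ContinuousOn (fun u : ℝ => K * t^((H-1)/2) * u^(H/2-1)) (Icc t (t+h)) := by
      intro u hu
      exact (((Real.continuousAt_rpow_const u _
        (Or.inl (lt_of_lt_of_le ht0 hu.1).ne')).continuousWithinAt).const_smul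
          (K * t^((H-1)/2)) : _)
    calc |φ (t + h) - φ t| = |∫ u in t..(t+h), φ' u| := by rw [hftc t ht]
      _ ≤ ∫ u in t..(t+h), |φ' u| := intervalIntegral.abs_integral_le_integral_abs hle
      _ ≤ ∫ u in t..(t+h), K * t^((H-1)/2) * u^(H/2-1) := by
          refine intervalIntegral.integral_mono_on hle ((hint t ht).abs)
            (hcont.intervalIntegrable_of_Icc hle) (fun u hu => ?_)
          have hu0 : (0:ℝ) < u := lt_of_lt_of_le ht0 hu.1
          have h1 : |φ' u| ≤ K * u ^ (H - 3/2) := hbound u (hsub t ht hu)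
          have h2 : u ^ (H - 3/2) = u^((H-1)/2) * u^(H/2-1) := by
            rw [← Real.rpow_add hu0]; ring_nf
          have h3 : u^((H-1)/2) ≤ t^((H-1)/2) :=
            Real.rpow_le_rpow_of_nonpos ht0 hu.1 (by linarith : (H-1)/2 ≤ 0)
          have h4 : (0:ℝ) ≤ u^(H/2-1) := Real.rpow_nonneg hu0.le _
          calc |φ' u| ≤ K * (u^((H-1)/2) * u^(H/2-1)) := by rw [← h2]; exact h1
            _ ≤ K * (t^((H-1)/2) * u^(H/2-1)) :=
                mul_le_mul_of_nonneg_left (mul_le_mul_of_nonneg_right h3 h4) hK.le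
            _ = K * t^((H-1)/2) * u^(H/2-1) := by ring
      _ = K * t^((H-1)/2) * ∫ u in t..(t+h), u^(H/2-1) := by
          rw [← intervalIntegral.integral_const_mul]
      _ = K * t^((H-1)/2) * (((t+h)^(H/2) - t^(H/2)) / (H/2)) := by
          rw [integral_rpow (Or.inl (by linarith : (-1:ℝ) < H/2 - 1))]
          norm_num
      _ ≤ K * t^((H-1)/2) * (h^(H/2) / (H/2)) := by
          have hsa : (t+h)^(H/2) - t^(H/2) ≤ h^(H/2) := by
            have := aux_subadd ht0.le hh0.le (by linarith : (0:ℝ) ≤ H/2)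
              (by linarith : H/2 ≤ 1)
            linarith
          gcongr
      _ = 2*K/H * h^(H/2) * t^((H-1)/2) := by
          field_simp
  -- second pointwise bound, on (h, T]
  have bnd2 : ∀ t ∈ Ioc h T, |φ (t + h) - φ t| ≤ K * h^((H+1)/2) * t^(H/2-1) := by
    intro t ht
    have ht' : t ∈ Ioc (0:ℝ) T := ⟨lt_trans hh0 ht.1, ht.2⟩
    have hle : t ≤ t + h := by linarith
    have ht0 : (0:ℝ) < t := ht'.1
    calc |φ (t + h) - φ t| = |∫ u in t..(t+h), φ' u| := by rw [hftc t ht']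
      _ ≤ ∫ u in t..(t+h), |φ' u| := intervalIntegral.abs_integral_le_integral_abs hle
      _ ≤ ∫ _u in t..(t+h), K * t ^ (H - 3/2) := by
          refine intervalIntegral.integral_mono_on hle ((hint t ht').abs)
            (intervalIntegrable_const) (fun u hu => ?_)
          calc |φ' u| ≤ K * u ^ (H - 3/2) := hbound u (hsub t ht' hu)
            _ ≤ K * t ^ (H - 3/2) := by
                have := Real.rpow_le_rpow_of_nonpos ht0 hu.1 (by linarith : H - 3/2 ≤ 0)
                exact mul_le_mul_of_nonneg_left this hK.le
      _ = K * t ^ (H - 3/2) * h := by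
          rw [intervalIntegral.integral_const]
          simp [smul_eq_mul]
          ring
      _ ≤ K * h^((H+1)/2) * t^(H/2-1) := by
          have h2 : t ^ (H - 3/2) = t^((H-1)/2) * t^(H/2-1) := by
            rw [← Real.rpow_add ht0]; ring_nf
          have h3 : t^((H-1)/2) ≤ h^((H-1)/2) :=
            Real.rpow_le_rpow_of_nonpos hh0 ht.1.le (by linarith : (H-1)/2 ≤ 0)
          have h5 : h^((H-1)/2) * h = h^((H+1)/2) := by
            rw [← Real.rpow_add_one hh0.ne', show (H-1)/2 + 1 = (H+1)/2 by ring]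
          have h4 : (0:ℝ) ≤ t^(H/2-1) := Real.rpow_nonneg ht0.le _
          calc K * t ^ (H - 3/2) * h = K * (t^((H-1)/2) * h) * t^(H/2-1) := by
                rw [h2]; ring
            _ ≤ K * (h^((H-1)/2) * h) * t^(H/2-1) :=
                mul_le_mul_of_nonneg_right
                  (mul_le_mul_of_nonneg_left (mul_le_mul_of_nonneg_right h3 hh0.le) hK.le) h4
            _ = K * h^((H+1)/2) * t^(H/2-1) := by rw [h5]
  -- measurability of the integrand
  have hfm : AEStronglyMeasurable (fun t => |φ (t + h) - φ t|) (volume.restrict (Ioc (0:ℝ) T)) := by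
    refine ContinuousOn.aestronglyMeasurable (fun t ht => ?_) measurableSet_Ioc
    have h1 : ContinuousAt φ (t + h) :=
      (hderiv (t+h) ⟨by linarith [ht.1], by linarith [ht.2]⟩).continuousAt
    have h2 : ContinuousAt φ t :=
      (hderiv t ⟨ht.1, by linarith [ht.2]⟩).continuousAt
    have hA : ContinuousAt (fun t : ℝ => φ (t + h)) t := by
      have hadd : ContinuousAt (fun x : ℝ => x + h) t := (continuous_add_right h).continuousAt
      exact ContinuousAt.comp h1 hadd
    exact ((hA.sub h2).abs).continuousWithinAt
  -- integrability on the two pieces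
  have hg1 : IntegrableOn (fun t : ℝ => 2*K/H * h^(H/2) * t^((H-1)/2)) (Ioc 0 h) := by
    refine (intervalIntegrable_iff_integrableOn_Ioc_of_le hh0.le).1 ?_
    exact (intervalIntegral.intervalIntegrable_rpow'
      (by linarith : (-1:ℝ) < (H-1)/2)).const_mul _
  have hg2 : IntegrableOn (fun t : ℝ => K * h^((H+1)/2) * t^(H/2-1)) (Ioc h T) := by
    refine (intervalIntegrable_iff_integrableOn_Ioc_of_le hhT).1 ?_
    exact (intervalIntegral.intervalIntegrable_rpow'
      (by linarith : (-1:ℝ) < H/2-1)).const_mul _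
  have hf1 : IntegrableOn (fun t => |φ (t + h) - φ t|) (Ioc 0 h) := by
    refine Integrable.mono' hg1
      (hfm.mono_measure (Measure.restrict_mono (Ioc_subset_Ioc_right hhT) le_rfl)) ?_
    refine (ae_restrict_iff' measurableSet_Ioc).2 (ae_of_all _ fun t ht => ?_)
    rw [Real.norm_eq_abs, abs_abs]
    exact bnd1 t ⟨ht.1, le_trans ht.2 hhT⟩
  have hf2 : IntegrableOn (fun t => |φ (t + h) - φ t|) (Ioc h T) := by
    refine Integrable.mono' hg2
      (hfm.mono_measure (Measure.restrict_mono (Ioc_subset_Ioc_left hh0.le) le_rfl)) ?_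
    refine (ae_restrict_iff' measurableSet_Ioc).2 (ae_of_all _ fun t ht => ?_)
    rw [Real.norm_eq_abs, abs_abs]
    exact bnd2 t ht
  -- split the integral
  have hsplit : (∫ t in Ioc (0:ℝ) T, |φ (t + h) - φ t|) =
      (∫ t in Ioc (0:ℝ) h, |φ (t + h) - φ t|) + ∫ t in Ioc h T, |φ (t + h) - φ t| := by
    rw [← setIntegral_union (Ioc_disjoint_Ioc_of_le le_rfl) measurableSet_Ioc hf1 hf2,
      Ioc_union_Ioc_eq_Ioc hh0.le hhT]
  rw [hsplit]
  have hhH : h ^ (H/2) ≤ T ^ (H/2) := Real.rpow_le_rpow hh0.le hhT (by linarith)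
  have hhp : (0:ℝ) < h ^ ((H+1)/2) := Real.rpow_pos_of_pos hh0 _
  -- first piece
  have I1 : (∫ t in Ioc (0:ℝ) h, |φ (t + h) - φ t|) ≤
      4*K/(H*(H+1)) * T^(H/2) * h^((H+1)/2) := by
    calc (∫ t in Ioc (0:ℝ) h, |φ (t + h) - φ t|)
        ≤ ∫ t in Ioc (0:ℝ) h, 2*K/H * h^(H/2) * t^((H-1)/2) := by
          refine setIntegral_mono_on hf1 hg1 measurableSet_Ioc (fun t ht => ?_)
          exact bnd1 t ⟨ht.1, le_trans ht.2 hhT⟩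
      _ = 2*K/H * h^(H/2) * ∫ t in (0:ℝ)..h, t^((H-1)/2) := by
          rw [intervalIntegral.integral_of_le hh0.le, ← integral_const_mul]
      _ = 2*K/H * h^(H/2) * (h^((H+1)/2) / ((H+1)/2)) := by
          rw [integral_rpow (Or.inl (by linarith : (-1:ℝ) < (H-1)/2))]
          rw [show (H-1)/2 + 1 = (H+1)/2 by ring,
            Real.zero_rpow (by positivity : (H+1)/2 ≠ 0)]
          norm_num
      _ ≤ 2*K/H * T^(H/2) * (h^((H+1)/2) / ((H+1)/2)) := by gcongr
      _ = 4*K/(H*(H+1)) * T^(H/2) * h^((H+1)/2) := by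
          field_simp
          ring
  -- second piece
  have I2 : (∫ t in Ioc h T, |φ (t + h) - φ t|) ≤ 2*K/H * T^(H/2) * h^((H+1)/2) := by
    calc (∫ t in Ioc h T, |φ (t + h) - φ t|)
        ≤ ∫ t in Ioc h T, K * h^((H+1)/2) * t^(H/2-1) := by
          exact setIntegral_mono_on hf2 hg2 measurableSet_Ioc (fun t ht => bnd2 t ht)
      _ = K * h^((H+1)/2) * ∫ t in h..T, t^(H/2-1) := by
          rw [intervalIntegral.integral_of_le hhT, ← integral_const_mul]
      _ = K * h^((H+1)/2) * ((T^(H/2) - h^(H/2)) / (H/2)) := by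
          rw [integral_rpow (Or.inl (by linarith : (-1:ℝ) < H/2-1))]
          norm_num
      _ ≤ K * h^((H+1)/2) * (T^(H/2) / (H/2)) := by
          gcongr
          · linarith [Real.rpow_nonneg hh0.le (H/2)]
      _ = 2*K/H * T^(H/2) * h^((H+1)/2) := by
          field_simp
  calc (∫ t in Ioc (0:ℝ) h, |φ (t + h) - φ t|) + ∫ t in Ioc h T, |φ (t + h) - φ t|
      ≤ 4*K/(H*(H+1)) * T^(H/2) * h^((H+1)/2) + 2*K/H * T^(H/2) * h^((H+1)/2) :=
        add_le_add I1 I2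
    _ = (4*K/(H*(H+1)) + 2*K/H) * T^(H/2) * h^((H+1)/2) := by ring
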